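/- Let α > 0, let F₀, F₁ : [0,1]^3 → [0,1]^3, and let x ∈ [0,1]^3 be a point such that F₀(x)_i − x_i < −α/5 and F₁(x)_i − x_i < −α/5 for every coordinate i ∈ {1,2,3}. Then for every t ∈ [0,1] and every coordinate i, the family F_t defined by the truncated homotopy formula satisfies F_t(x)_i − x_i < −α/5; in particular ‖F_t(x) − x‖_∞ > α/5, so x is not an (α/5)-approximate fixpoint of F_t for any t. -/
import Mathlib


/-- Truncation to [0,1]: T(a) = min(1, max(0, a)). -/
noncomputable def trunc01 (a : ℝ) : ℝ := min 1 (max 0 a)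

/-- The truncated homotopy formula: for t ∈ [0,1],
F_t(x)_i = max( min(F₀(x)_i, F₁(x)_i), T( T(F₀(x)_i − t) + T(F₁(x)_i − (1 − t)) ) ). -/
noncomputable def truncHomotopy (F0 F1 : (Fin 3 → ℝ) → Fin 3 → ℝ) (t : ℝ)
    (x : Fin 3 → ℝ) : Fin 3 → ℝ :=
  fun i => max (min (F0 x i) (F1 x i))
    (trunc01 (trunc01 (F0 x i - t) + trunc01 (F1 x i - (1 - t))))

lemma trunc_sum_le_max {a b t : ℝ} (ha0 : 0 ≤ a) (ha : a ≤ 1) (hb : b ≤ 1)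
    (ht0 : 0 ≤ t) (ht1 : t ≤ 1) :
    trunc01 (trunc01 (a - t) + trunc01 (b - (1 - t))) ≤ max a b := by
  have hab : 0 ≤ max a b := le_trans ha0 (le_max_left a b)
  unfold trunc01
  have h1 : min 1 (max 0 (a - t)) + min 1 (max 0 (b - (1 - t))) ≤ max a b := by
    rcases le_or_gt (a - t) 0 with h | h
    · have : min 1 (max 0 (a - t)) = 0 := by
        simp [max_eq_left h]
      rw [this, zero_add]
      calc min 1 (max 0 (b - (1 - t))) ≤ max 0 (b - (1 - t)) := min_le_right _ _
        _ ≤ max a b := max_le hab (by nlinarith [le_max_right a b])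
    · rcases le_or_gt (b - (1 - t)) 0 with h2 | h2
      · have : min 1 (max 0 (b - (1 - t))) = 0 := by
          simp [max_eq_left h2]
        rw [this, add_zero]
        calc min 1 (max 0 (a - t)) ≤ max 0 (a - t) := min_le_right _ _
          _ ≤ max a b := max_le hab (by nlinarith [le_max_left a b])
      · have e1 : min 1 (max 0 (a - t)) ≤ a - t := by
          rw [max_eq_right h.le]; exact min_le_right _ _
        have e2 : min 1 (max 0 (b - (1 - t))) ≤ b - (1 - t) := by
          rw [max_eq_right h2.le]; exact min_le_right _ _
        nlinarith [le_max_left a b, le_max_right a b]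
  calc min 1 (max 0 _) ≤ max 0 _ := min_le_right _ _
    _ ≤ max a b := max_le hab h1

/-- if at a point x both F₀(x) − x and F₁(x) − x have all coordinates
below −α/5, then so does F_t(x) − x for every t ∈ [0,1]; in particular
‖F_t(x) − x‖_∞ > α/5, so x is not an (α/5)-approximate fixpoint of any F_t. -/
theorem truncHomotopy_no_approx_fixpoint (α : ℝ) (hα : 0 < α)
    (F0 F1 : (Fin 3 → ℝ) → Fin 3 → ℝ)
    (h0 : Set.MapsTo F0 (Set.Icc 0 1) (Set.Icc 0 1))
    (h1 : Set.MapsTo F1 (Set.Icc 0 1) (Set.Icc 0 1))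
    (x : Fin 3 → ℝ) (hx : x ∈ Set.Icc (0 : Fin 3 → ℝ) 1)
    (hF0 : ∀ i : Fin 3, F0 x i - x i < -(α / 5))
    (hF1 : ∀ i : Fin 3, F1 x i - x i < -(α / 5)) :
    ∀ t ∈ Set.Icc (0 : ℝ) 1,
      (∀ i : Fin 3, truncHomotopy F0 F1 t x i - x i < -(α / 5)) ∧
      α / 5 < dist (truncHomotopy F0 F1 t x) x := by
  intro t ht
  have hF0m := h0 hx
  have hF1m := h1 hx
  have key : ∀ i : Fin 3, truncHomotopy F0 F1 t x i - x i < -(α / 5) := by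
    intro i
    have ha0 : (0 : ℝ) ≤ F0 x i := hF0m.1 i
    have ha1 : F0 x i ≤ 1 := hF0m.2 i
    have hb1 : F1 x i ≤ 1 := hF1m.2 i
    have hle : truncHomotopy F0 F1 t x i ≤ max (F0 x i) (F1 x i) := by
      unfold truncHomotopy
      exact max_le (le_trans (min_le_left _ _) (le_max_left _ _))
        (trunc_sum_le_max ha0 ha1 hb1 ht.1 ht.2)
    have : max (F0 x i) (F1 x i) - x i < -(α / 5) := by
      rcases max_cases (F0 x i) (F1 x i) with ⟨h, _⟩ | ⟨h, _⟩ <;> rw [h]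
      · exact hF0 i
      · exact hF1 i
    linarith
  refine ⟨key, ?_⟩
  have h0' := key 0
  have habs : α / 5 < |truncHomotopy F0 F1 t x 0 - x 0| := by
    rw [abs_sub_comm, abs_of_pos (by linarith)]
    linarith
  calc α / 5 < |truncHomotopy F0 F1 t x 0 - x 0| := habs
    _ = dist (truncHomotopy F0 F1 t x 0) (x 0) := (Real.dist_eq _ _).symm
    _ ≤ dist (truncHomotopy F0 F1 t x) x := dist_le_pi_dist _ _ 0
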